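/- Every P5-free graph G with chromatic number at least 2 has a vertex v such that the chromatic number of the subgraph induced on the neighbourhood of v is at least χ(G)/3. -/

import Mathlib

open SimpleGraph

/-- The chromatic number of the subgraph of `G` induced on `S`, as a natural number. -/
noncomputable def chiS {V : Type*} [Fintype V] (G : SimpleGraph V) (S : Set V) : ℕ :=
  (G.induce S).chromaticNumber.toNat

/-- A graph is `P5`-free if it has no induced subgraph isomorphic to the five-vertex path. -/
def P5Free {V : Type*} (G : SimpleGraph V) : Prop :=
  IsEmpty (SimpleGraph.pathGraph 5 ↪g G)

section Helpers

variable {V : Type*} {G : SimpleGraph V}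

/-- Reachability within a set `S`. -/
def Rch (G : SimpleGraph V) (S : Set V) : V → V → Prop :=
  Relation.ReflTransGen (fun x y => x ∈ S ∧ y ∈ S ∧ G.Adj x y)

lemma rch_refl (S : Set V) (a : V) : Rch G S a a := Relation.ReflTransGen.refl

lemma rch_symm {S : Set V} {a b : V} (h : Rch G S a b) : Rch G S b a := by
  refine (@Relation.ReflTransGen.stdSymm _ _ ⟨?_⟩).symm _ _ h
  rintro x y ⟨hx, hy, hxy⟩
  exact ⟨hy, hx, hxy.symm⟩

lemma rch_trans {S : Set V} {a b c : V} (h1 : Rch G S a b) (h2 : Rch G S b c) :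
    Rch G S a c := h1.trans h2

lemma rch_mem {S : Set V} {a b : V} (h : Rch G S a b) (ha : a ∈ S) : b ∈ S := by
  induction h with
  | refl => exact ha
  | tail _ h2 _ => exact h2.2.1

lemma rch_single {S : Set V} {a b : V} (ha : a ∈ S) (hb : b ∈ S) (hab : G.Adj a b) :
    Rch G S a b := Relation.ReflTransGen.single ⟨ha, hb, hab⟩

/-- Monotonicity of colorability of induced subgraphs. -/
lemma colorable_mono_set {S T : Set V} (hST : S ⊆ T) {n : ℕ}
    (h : (G.induce T).Colorable n) : (G.induce S).Colorable n := by
  refine Colorable.of_hom (RelEmbedding.toRelHom (⟨⟨Set.inclusion hST, Set.inclusion_injective hST⟩, ?_⟩ : G.induce S ↪g G.induce T)) h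
  intro a b
  simp [comap_adj, Set.inclusion]

lemma colorable_union {S T : Set V} {a b : ℕ}
    (hS : (G.induce S).Colorable a) (hT : (G.induce T).Colorable b) :
    (G.induce (S ∪ T)).Colorable (a + b) := by
  classical
  obtain ⟨cS⟩ := hS
  obtain ⟨cT⟩ := hT
  refine ⟨Coloring.mk (fun x => if h : (x : V) ∈ S then Fin.castAdd b (cS ⟨x, h⟩)
    else Fin.natAdd a (cT ⟨x, x.2.resolve_left h⟩)) ?_⟩
  rintro ⟨x, hx⟩ ⟨y, hy⟩ hadj
  have hxy : G.Adj x y := hadj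
  simp only
  by_cases hxS : x ∈ S <;> by_cases hyS : y ∈ S <;>
    simp only [hxS, hyS, dif_pos, dif_neg, not_false_iff] <;> intro hcontra
  · exact cS.valid (by exact hxy) (Fin.castAdd_injective _ _ hcontra)
  · have h1 : ((Fin.castAdd b (cS ⟨x, hxS⟩)) : ℕ) < a := (cS ⟨x, hxS⟩).2
    have h2 := congrArg (fun z : Fin (a+b) => (z : ℕ)) hcontra
    simp only [Fin.coe_castAdd, Fin.coe_natAdd] at h2
    omega
  · have h1 : ((Fin.castAdd b (cS ⟨y, hyS⟩)) : ℕ) < a := (cS ⟨y, hyS⟩).2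
    have h2 := congrArg (fun z : Fin (a+b) => (z : ℕ)) hcontra
    simp only [Fin.coe_castAdd, Fin.coe_natAdd] at h2
    omega
  · refine cT.valid (show (G.induce T).Adj ⟨x, hx.resolve_left hxS⟩ ⟨y, hy.resolve_left hyS⟩ from hxy) ?_
    have h2 := congrArg (fun z : Fin (a+b) => (z : ℕ)) hcontra
    simp only [Fin.coe_natAdd] at h2
    exact Fin.ext (by omega)

/-- If every reachability class of `S` is `n`-colorable, then `S` is. -/
lemma colorable_pieces {S : Set V} {n : ℕ}
    (h : ∀ x ∈ S, (G.induce {y | y ∈ S ∧ Rch G S x y}).Colorable n) :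
    (G.induce S).Colorable n := by
  classical
  rcases Nat.eq_zero_or_pos n with hn | hn
  · subst hn
    have hSe : IsEmpty ↥S := by
      constructor
      rintro ⟨x, hx⟩
      exact (Colorable.isEmpty (h x hx)).false ⟨x, hx, rch_refl S x⟩
    exact Colorable.of_isEmpty 0
  have hnz : Fin n := ⟨0, hn⟩
  let s : Setoid V := ⟨Rch G S, ⟨rch_refl S, rch_symm, rch_trans⟩⟩
  let rep : V → V := fun x => (@Quotient.mk _ s x).out
  have hrep : ∀ x, Rch G S (rep x) x := fun x => @Quotient.mk_out _ s x
  have hrepS : ∀ x ∈ S, rep x ∈ S := fun x hx => rch_mem (rch_symm (hrep x)) hx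
  have hrepEq : ∀ x y, Rch G S x y → rep x = rep y := by
    intro x y hxy
    simp only [rep]
    congr 1
    exact Quotient.sound hxy
  let cl : V → V → Fin n := fun z w =>
    if hw : z ∈ S ∧ w ∈ S ∧ Rch G S z w then (h z hw.1).some ⟨w, hw.2.1, hw.2.2⟩ else hnz
  refine ⟨Coloring.mk (fun x => cl (rep x) x) ?_⟩
  rintro ⟨x, hx⟩ ⟨y, hy⟩ hadj
  have hxy : G.Adj x y := hadj
  have hr : Rch G S x y := rch_single hx hy hxy
  have he : rep x = rep y := hrepEq x y hr
  simp only
  have h2 : cl (rep y) y = cl (rep x) y := by rw [he]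
  rw [h2]
  have c1 : rep x ∈ S ∧ x ∈ S ∧ Rch G S (rep x) x := ⟨hrepS x hx, hx, hrep x⟩
  have c2 : rep x ∈ S ∧ y ∈ S ∧ Rch G S (rep x) y := ⟨hrepS x hx, hy, he ▸ hrep y⟩
  simp only [cl, dif_pos c1, dif_pos c2]
  exact (h (rep x) c1.1).some.valid (by exact hxy)

lemma colorable_singleton (v : V) {n : ℕ} (hn : 1 ≤ n) :
    (G.induce ({v} : Set V)).Colorable n := by
  refine ⟨Coloring.mk (fun _ => ⟨0, hn⟩) ?_⟩
  rintro ⟨x, hx⟩ ⟨y, hy⟩ hadj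
  exfalso
  rw [Set.mem_singleton_iff] at hx hy
  have hxyeq : x = y := hx.trans hy.symm
  subst hxyeq
  exact G.loopless.irrefl x hadj

end Helpers

section Main


variable {V : Type*} {G : SimpleGraph V}

lemma p5_false (hP5 : P5Free G) {v u a b1 b2 : V}
    (h1 : G.Adj v u) (h2 : G.Adj u a) (h3 : G.Adj a b1) (h4 : G.Adj b1 b2)
    (n1 : ¬ G.Adj v a) (n2 : ¬ G.Adj v b1) (n3 : ¬ G.Adj v b2)
    (n4 : ¬ G.Adj u b1) (n5 : ¬ G.Adj u b2) (n6 : ¬ G.Adj a b2)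
    (d1 : v ≠ a) (d2 : v ≠ b1) (d3 : v ≠ b2) (d4 : u ≠ b1) (d5 : u ≠ b2) (d6 : a ≠ b2) :
    False := by
  have e1 : v ≠ u := h1.ne
  have e2 : u ≠ a := h2.ne
  have e3 : a ≠ b1 := h3.ne
  have e4 : b1 ≠ b2 := h4.ne
  let f : Fin 5 → V := ![v, u, a, b1, b2]
  refine hP5.false ⟨⟨f, ?_⟩, ?_⟩
  · intro i j hij
    have hij' : f i = f j := hij
    fin_cases i <;> fin_cases j <;>
      simp_all [f, e1, e2, e3, e4, d1, d2, d3, d4, d5, d6,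
        e1.symm, e2.symm, e3.symm, e4.symm, d1.symm, d2.symm, d3.symm, d4.symm,
        d5.symm, d6.symm, h1.ne', h2.ne', h3.ne', h4.ne']
  · intro i j
    change G.Adj (f i) (f j) ↔ _
    have s1 := h1.symm
    have s2 := h2.symm
    have s3 := h3.symm
    have s4 := h4.symm
    have m1 : ¬ G.Adj a v := fun h => n1 h.symm
    have m2 : ¬ G.Adj b1 v := fun h => n2 h.symm
    have m3 : ¬ G.Adj b2 v := fun h => n3 h.symm
    have m4 : ¬ G.Adj b1 u := fun h => n4 h.symm
    have m5 : ¬ G.Adj b2 u := fun h => n5 h.symm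
    have m6 : ¬ G.Adj b2 a := fun h => n6 h.symm
    fin_cases i <;> fin_cases j <;>
      simp [f, pathGraph_adj, h1, h2, h3, h4, s1, s2, s3, s4,
        n1, n2, n3, n4, n5, n6, m1, m2, m3, m4, m5, m6, Function.Embedding.coeFn_mk] <;> decide

/-- Main combinatorial lemma. -/
lemma main_colorable (hP5 : P5Free G) (m : ℕ) (hm1 : 1 ≤ m)
    (hN : ∀ w : V, (G.induce (G.neighborSet w)).Colorable m) :
    (G.induce (Set.univ : Set V)).Colorable (3 * m) := by
  classical
  apply colorable_pieces
  intro v _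
  set C : Set V := {y | y ∈ Set.univ ∧ Rch G Set.univ v y} with hC
  have hdecomp : C = (C ∩ G.neighborSet v) ∪ (C \ G.neighborSet v) := by
    ext z
    by_cases hz : z ∈ G.neighborSet v <;> simp [hz]
  rw [hdecomp, show 3*m = m + 2*m by ring]
  apply colorable_union
  · exact colorable_mono_set Set.inter_subset_right (hN v)
  set S2 : Set V := C \ G.neighborSet v with hS2
  apply colorable_pieces
  intro y hy
  set D : Set V := {z | z ∈ S2 ∧ Rch G S2 y z} with hD
  by_cases hvD : v ∈ D
  · -- D = {v}
    have hstuck : ∀ w, Rch G S2 v w → w = v := by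
      intro w hw
      rcases Relation.ReflTransGen.cases_head hw with h | ⟨c, hc, _⟩
      · exact h.symm
      · exact ((hc.2.1.2 : c ∉ G.neighborSet v) hc.2.2).elim
    have hDsub : D ⊆ {v} := by
      intro z hz
      have hvz : Rch G S2 v z := rch_trans (rch_symm hvD.2) hz.2
      exact Set.mem_singleton_iff.mpr (hstuck z hvz)
    exact colorable_mono_set hDsub (colorable_singleton v (by omega))
  · -- main case: v ∉ D
    have hyS2 : y ∈ S2 := hy
    have hyD : y ∈ D := ⟨hyS2, rch_refl _ _⟩
    -- D is closed under Rch in S2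
    have hDclosed : ∀ z ∈ D, ∀ z', Rch G S2 z z' → z' ∈ D := by
      intro z hz z' hzz'
      rcases Relation.ReflTransGen.cases_head (rch_symm hzz') with h | ⟨c, hc, _⟩
      · exact h ▸ hz
      · exact ⟨hc.1, rch_trans hz.2 hzz'⟩
    -- attachment: find u ∈ N(v) with a neighbour d in D
    have attach : ∀ x, Rch G Set.univ v x →
        x ∈ G.neighborSet v ∨ x = v ∨
        ∃ u d, u ∈ G.neighborSet v ∧ d ∈ S2 ∧ G.Adj u d ∧ Rch G S2 d x := by
      intro x hx
      induction hx with
      | refl => right; left; rfl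
      | @tail p q hp hstep ih =>
        by_cases hqN : q ∈ G.neighborSet v
        · exact Or.inl hqN
        · by_cases hqv : q = v
          · exact Or.inr (Or.inl hqv)
          · have hqS2 : q ∈ S2 := ⟨⟨trivial, hp.tail hstep⟩, hqN⟩
            rcases ih with hpN | hpv | ⟨u, d, hu, hd, hud, hrch⟩
            · exact Or.inr (Or.inr ⟨p, q, hpN, hqS2, hstep.2.2, rch_refl _ _⟩)
            · exact (hqN (hpv ▸ hstep.2.2 : G.Adj v q)).elim
            · have hpS2 : p ∈ S2 := rch_mem hrch hd
              exact Or.inr (Or.inr ⟨u, d, hu, hd, hud,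
                hrch.tail ⟨hpS2, hqS2, hstep.2.2⟩⟩)
    have hyC : Rch G Set.univ v y := hyS2.1.2
    rcases attach y hyC with hyN | hyv | ⟨u, d, hu, hdS2, hud, hrchdy⟩
    · exact (hyS2.2 hyN).elim
    · exact (hvD (hyv ▸ hyD)).elim
    have hdD : d ∈ D := hDclosed y hyD d (rch_symm hrchdy)
    set A : Set V := D ∩ G.neighborSet u with hA
    set B : Set V := D \ G.neighborSet u with hB
    have hDAB : D = A ∪ B := by
      ext z
      by_cases hz : z ∈ G.neighborSet u <;> simp [hA, hB, hz]
    rw [hDAB, show 2*m = m + m by ring]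
    apply colorable_union
    · exact colorable_mono_set Set.inter_subset_right (hN u)
    apply colorable_pieces
    intro b0 hb0
    set B' : Set V := {z | z ∈ B ∧ Rch G B b0 z} with hB'
    have hB'closed : ∀ z ∈ B', ∀ z', z' ∈ B → Rch G B z z' → z' ∈ B' := by
      intro z hz z' hz'B hzz'
      exact ⟨hz'B, rch_trans hz.2 hzz'⟩
    have hb0D : b0 ∈ D := hb0.1
    -- walk2: find a2 ∈ A adjacent to B'
    have walk2 : ∀ z, Rch G S2 b0 z →
        z ∈ B' ∨ ∃ a2 b2, a2 ∈ A ∧ b2 ∈ B' ∧ G.Adj a2 b2 := by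
      intro z hz
      induction hz with
      | refl => exact Or.inl ⟨hb0, rch_refl _ _⟩
      | @tail p q hp hstep ih =>
        have hqD : q ∈ D := hDclosed b0 hb0D q (hp.tail hstep)
        rcases ih with hpB' | hex
        · by_cases hqN : q ∈ G.neighborSet u
          · exact Or.inr ⟨q, p, ⟨hqD, hqN⟩, hpB', hstep.2.2.symm⟩
          · exact Or.inl (hB'closed p hpB' q ⟨hqD, hqN⟩
              (Relation.ReflTransGen.single ⟨hpB'.1, ⟨hqD, hqN⟩, hstep.2.2⟩))
        · exact Or.inr hex
    have hrchb0d : Rch G S2 b0 d := rch_trans (rch_symm hb0D.2) hdD.2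
    rcases walk2 d hrchb0d with hdB' | ⟨a2, b2, ha2A, hb2B', hadj2⟩
    · exact (hdB'.1.2 (hud : d ∈ G.neighborSet u)).elim
    -- a2 is complete to B'
    have hcomplete : ∀ z ∈ B', G.Adj a2 z := by
      by_contra hcon
      push_neg at hcon
      obtain ⟨z0, hz0B', hz0na⟩ := hcon
      have hrchb2z0 : Rch G B b2 z0 := rch_trans (rch_symm hb2B'.2) hz0B'.2
      have walk3 : ∀ z, Rch G B b2 z →
          G.Adj a2 z ∨ ∃ c1 c2, c1 ∈ B' ∧ c2 ∈ B' ∧ G.Adj a2 c1 ∧ ¬ G.Adj a2 c2 ∧ G.Adj c1 c2 := by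
        intro z hz
        induction hz with
        | refl => exact Or.inl hadj2
        | @tail p q hp hstep ih =>
          by_cases hqa : G.Adj a2 q
          · exact Or.inl hqa
          · rcases ih with hpa | hex
            · have hpB'2 : p ∈ B' := hB'closed b2 hb2B' p hstep.1 hp
              have hqB'2 : q ∈ B' := hB'closed b2 hb2B' q hstep.2.1 (hp.tail hstep)
              exact Or.inr ⟨p, q, hpB'2, hqB'2, hpa, hqa, hstep.2.2⟩
            · exact Or.inr hex
      rcases walk3 z0 hrchb2z0 with hz0a | ⟨c1, c2, hc1, hc2, hac1, hac2, hc12⟩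
      · exact hz0na hz0a
      -- build the P5: v - u - a2 - c1 - c2
      have ha2D : a2 ∈ D := ha2A.1
      have ha2S2 : a2 ∈ S2 := ha2D.1
      have hc1D : c1 ∈ D := hc1.1.1
      have hc2D : c2 ∈ D := hc2.1.1
      have hc1S2 : c1 ∈ S2 := hc1D.1
      have hc2S2 : c2 ∈ S2 := hc2D.1
      refine p5_false hP5 (hu : G.Adj v u) (ha2A.2 : G.Adj u a2) hac1 hc12
        ?_ ?_ ?_ ?_ ?_ hac2 ?_ ?_ ?_ ?_ ?_ ?_
      · exact fun h => ha2S2.2 h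
      · exact fun h => hc1S2.2 h
      · exact fun h => hc2S2.2 h
      · exact fun h => hc1.1.2 (h : c1 ∈ G.neighborSet u)
      · exact fun h => hc2.1.2 (h : c2 ∈ G.neighborSet u)
      · exact fun h => hvD (h ▸ ha2D)
      · exact fun h => hvD (h ▸ hc1D)
      · exact fun h => hvD (h ▸ hc2D)
      · exact fun h => hc1S2.2 (h ▸ hu : c1 ∈ G.neighborSet v)
      · exact fun h => hc2S2.2 (h ▸ hu : c2 ∈ G.neighborSet v)
      · exact fun h => hc2.1.2 (h ▸ ha2A.2 : c2 ∈ G.neighborSet u) -- a2 ≠ c2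
    have hB'sub : B' ⊆ G.neighborSet a2 := fun z hz => (hcomplete z hz : G.Adj a2 z)
    exact colorable_mono_set hB'sub (hN a2)

end Main

theorem stmt_0 {V : Type*} [Fintype V] (G : SimpleGraph V)
    (hP5 : P5Free G) (h2 : 2 ≤ chiS G Set.univ) :
    ∃ v : V, (chiS G Set.univ : ℝ) ≤ 3 * chiS G (G.neighborSet v) := by
  classical
  -- V is nonempty
  have hne : Nonempty V := by
    by_contra h
    have : IsEmpty V := not_nonempty_iff.mp h
    have : IsEmpty (Set.univ : Set V) := by infer_instance
    have h0 : (G.induce (Set.univ : Set V)).chromaticNumber = 0 :=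
      chromaticNumber_eq_zero_of_isEmpty
    simp [chiS, h0] at h2
  -- choose argmax
  obtain ⟨vstar, hvstar⟩ := Finite.exists_max (fun v : V => chiS G (G.neighborSet v))
  set m := chiS G (G.neighborSet vstar) with hm
  -- each neighborhood colorable with m colors
  have hN : ∀ w : V, (G.induce (G.neighborSet w)).Colorable m := by
    intro w
    have : (G.induce (G.neighborSet w)).Colorable (chiS G (G.neighborSet w)) := by
      have : Finite (G.neighborSet w) := Subtype.finite
      exact colorable_chromaticNumber_of_fintype _
    exact this.mono (hvstar w)
  -- m ≥ 1
  have hm1 : 1 ≤ m := by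
    by_contra hcon
    have hm0 : m = 0 := by omega
    have hnoadj : ∀ a b : V, ¬ G.Adj a b := by
      intro a b hab
      have h0' : (G.induce (G.neighborSet a)).Colorable 0 := hm0 ▸ hN a
      exact (Colorable.isEmpty h0').false ⟨b, hab⟩
    have hcol1 : (G.induce (Set.univ : Set V)).Colorable 1 := by
      refine ⟨Coloring.mk (fun _ => 0) ?_⟩
      rintro ⟨x, _⟩ ⟨y, _⟩ hadj
      exact absurd hadj (hnoadj x y)
    have hch := hcol1.chromaticNumber_le
    have hle : chiS G Set.univ ≤ 1 := ENat.toNat_le_of_le_coe (by exact_mod_cast hch)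
    omega
  -- main lemma
  have hmain := main_colorable hP5 m hm1 hN
  refine ⟨vstar, ?_⟩
  have hle : chiS G Set.univ ≤ 3 * m := by
    exact ENat.toNat_le_of_le_coe (by exact_mod_cast hmain.chromaticNumber_le)
  calc (chiS G Set.univ : ℝ) ≤ ((3 * m : ℕ) : ℝ) := by exact_mod_cast hle
    _ = 3 * m := by push_cast; ring
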